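/- The associated incidence hypergraph functor Ǔ from quivers to incidence hypergraphs admits a right adjoint R⃗ (directed clique replacement): for every quiver Q, incidence hypergraph G, and incidence hypergraph homomorphism φ : Ǔ(Q) → G, there is a unique quiver homomorphism φ̂ : Q → R⃗(G) with θ̌_G ∘ Ǔ(φ̂) = φ. -/

import Mathlib

/-- A quiver: vertex set, edge set, source and target maps. -/
structure Quiv : Type 1 where
  V : Type
  E : Type
  s : E → V
  t : E → V

/-- A quiver homomorphism. -/
structure QuivHom (Q Q' : Quiv) where
  fv : Q.V → Q'.V
  fe : Q.E → Q'.E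
  hs : ∀ e, Q'.s (fe e) = fv (Q.s e)
  ht : ∀ e, Q'.t (fe e) = fv (Q.t e)

/-- An incidence hypergraph: vertices, edges, incidences, port and attachment maps. -/
structure IncHyp : Type 1 where
  V : Type
  E : Type
  I : Type
  port : I → V
  att : I → E

/-- An incidence hypergraph homomorphism. -/
structure IncHom (G G' : IncHyp) where
  fv : G.V → G'.V
  fe : G.E → G'.E
  fi : G.I → G'.I
  hport : ∀ i, G'.port (fi i) = fv (G.port i)
  hatt : ∀ i, G'.att (fi i) = fe (G.att i)

/-- Composition of incidence hypergraph homomorphisms. -/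
def IncHom.comp {G H K : IncHyp} (φ : IncHom G H) (ψ : IncHom H K) : IncHom G K :=
  ⟨ψ.fv ∘ φ.fv, ψ.fe ∘ φ.fe, ψ.fi ∘ φ.fi,
    fun i => by simp [ψ.hport, φ.hport],
    fun i => by simp [ψ.hatt, φ.hatt]⟩

/-- The associated incidence hypergraph Ǔ(Q) of a quiver: incidences `{0,1} × E`,
where `0` ports to the source and `1` ports to the target. -/
def Ucheck (Q : Quiv) : IncHyp :=
  ⟨Q.V, Q.E, Bool × Q.E, fun j => if j.1 then Q.t j.2 else Q.s j.2, fun j => j.2⟩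

/-- The action of Ǔ on quiver homomorphisms. -/
def UcheckHom {Q Q' : Quiv} (φ : QuivHom Q Q') : IncHom (Ucheck Q) (Ucheck Q') :=
  ⟨φ.fv, φ.fe, fun j => (j.1, φ.fe j.2),
    fun j => by rcases j with ⟨b, e⟩; cases b <;> simp [Ucheck, φ.hs, φ.ht],
    fun j => rfl⟩

/-- The directed clique replacement quiver R⃗(G): arcs are pairs of incidences lying in
a common edge, with source and target the respective ports. -/
def Rvec (G : IncHyp) : Quiv :=
  ⟨G.V, {p : G.I × G.I // G.att p.1 = G.att p.2},
    fun p => G.port p.val.1, fun p => G.port p.val.2⟩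

/-- The counit `θ̌_G : Ǔ(R⃗(G)) → G`. -/
def thetaCheck (G : IncHyp) : IncHom (Ucheck (Rvec G)) G :=
  ⟨id, fun p => G.att p.val.1,
    fun j => if j.1 then j.2.val.2 else j.2.val.1,
    fun j => by rcases j with ⟨b, p⟩; cases b <;> rfl,
    fun j => by rcases j with ⟨b, p⟩; cases b <;> simp [Ucheck] <;> exact p.property.symm⟩

lemma IncHom.ext' {G G' : IncHyp} {f g : IncHom G G'} (hv : f.fv = g.fv)
    (he : f.fe = g.fe) (hi : f.fi = g.fi) : f = g := by
  cases f; cases g; simp_all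

/-- The associated incidence hypergraph functor Ǔ admits the directed clique
replacement R⃗ as a right adjoint: every incidence hypergraph homomorphism
`φ : Ǔ(Q) → G` factors uniquely through `θ̌_G` by a quiver homomorphism
`φ̂ : Q → R⃗(G)`. -/
theorem directed_clique_replacement_right_adjoint (Q : Quiv) (G : IncHyp)
    (φ : IncHom (Ucheck Q) G) :
    ∃! φh : QuivHom Q (Rvec G), (UcheckHom φh).comp (thetaCheck G) = φ := by
  refine ⟨⟨φ.fv, fun e => ⟨(φ.fi (false, e), φ.fi (true, e)), by
      exact (φ.hatt (false, e)).trans (φ.hatt (true, e)).symm⟩, fun e => φ.hport (false, e),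
      fun e => φ.hport (true, e)⟩, ?_, ?_⟩
  · refine IncHom.ext' rfl ?_ ?_
    · funext e
      simp [IncHom.comp, UcheckHom, thetaCheck]
      exact φ.hatt (false, e)
    · funext j
      rcases j with ⟨b, e⟩
      cases b <;> simp [IncHom.comp, UcheckHom, thetaCheck] <;> rfl
  · rintro ⟨fv, fe, hs, ht⟩ h
    have hv : ∀ v, fv v = φ.fv v := fun v => congrFun (congrArg IncHom.fv h) v
    have hi : ∀ j, (if j.1 = true then ((fe j.2).val.2) else ((fe j.2).val.1)) = φ.fi j :=
      fun j => congrFun (congrArg IncHom.fi h) j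
    have : ∀ e, fe e = ⟨(φ.fi (false, e), φ.fi (true, e)), by exact (φ.hatt (false, e)).trans (φ.hatt (true, e)).symm⟩ := by
      intro e
      have h1 := hi (false, e)
      have h2 := hi (true, e)
      simp at h1 h2
      apply Subtype.ext
      exact Prod.ext h1 h2
    refine (QuivHom.mk.injEq ..).mpr ?_
    exact ⟨funext hv, funext this⟩
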